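/- Let p = 4m+1 be prime with m ≥ 1, and let a : {0,…,2m} → ZMod p be injective and satisfy: for every x ∈ ZMod p, either x or −x lies in the image of a (so that the image is a half-system containing 0, with ZMod p the disjoint union of {0}, the nonzero image, and its negatives). Let δ₁, δ₂ ∈ {1, −1}, and let D ∈ ZMod p be the determinant of the (2m+1)×(2m+1) matrix over ZMod p with (i,j) entry χ(a_i + a_j) + χ(a_i − a_j) + δ₁·χ(a_i² + δ₂·a_j²). Then 2D is a nonzero square in ZMod p, i.e., the quadratic character of ZMod p takes the value 1 at 2D. -/
import Mathlib


open Matrix BigOperators Finset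

lemma sum_even_range {R : Type*} [AddCommMonoid R] (n : ℕ) (g : ℕ → R)
    (h0 : ∀ r, Odd r → g r = 0) :
    ∑ r ∈ range (2*n+1), g r = ∑ l ∈ range (n+1), g (2*l) := by
  induction n with
  | zero => simp
  | succ n ih =>
      have e1 : 2*(n+1)+1 = (2*n+1) + 1 + 1 := by ring
      rw [e1, Finset.sum_range_succ, Finset.sum_range_succ, ih,
        Finset.sum_range_succ (fun l => g (2*l)) (n+1),
        h0 (2*n+1) ⟨n, by ring⟩]
      simp only [add_zero]
      have : 2 * n + 2 = 2 * (n+1) := by omega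
      rw [this]

lemma sum_if_eq {R : Type*} [AddCommMonoid R] (n t l : ℕ) (h : ℕ → R) :
    ∑ k ∈ range n, (if k + l = t then h k else 0)
      = if l ≤ t ∧ t - l < n then h (t - l) else 0 := by
  by_cases hl : l ≤ t
  · have : ∀ k ∈ range n, (if k + l = t then h k else 0) = (if k = t - l then h k else 0) := by
      intro k _
      exact if_congr (by omega) rfl rfl
    rw [Finset.sum_congr rfl this, Finset.sum_ite_eq' (range n) (t-l) h]
    simp [hl, Finset.mem_range]
  · rw [Finset.sum_eq_zero, if_neg (by omega)]
    intro k _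
    rw [if_neg (by omega)]

/-- the universal coefficient -/
noncomputable def cmat (R : Type*) [CommRing R] (m : ℕ) (δ₁ δ₂ : R) (k l : ℕ) : R :=
  (if k + l = m then (2 * ((2*m).choose (2*l)) : R) else 0)
  + (if k + l = 2*m then δ₁ * δ₂^l * ((2*m).choose l : R) else 0)

lemma entry_eq {R : Type*} [CommRing R] (m : ℕ) (δ₁ δ₂ : R) (x y : R) :
    (x+y)^(2*m) + (x-y)^(2*m) + δ₁*(x^2+δ₂*y^2)^(2*m)
      = ∑ k ∈ range (2*m+1), ∑ l ∈ range (2*m+1),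
          (x^2)^k * cmat R m δ₁ δ₂ k l * (y^2)^l := by
  unfold cmat
  -- split RHS into two double sums
  have hsplit : ∀ k l : ℕ, (x^2)^k * ((if k + l = m then (2 * ((2*m).choose (2*l)) : R) else 0)
      + (if k + l = 2*m then δ₁ * δ₂^l * ((2*m).choose l : R) else 0)) * (y^2)^l
      = (if k + l = m then (x^2)^k * (2 * ((2*m).choose (2*l)) : R) * (y^2)^l else 0)
      + (if k + l = 2*m then (x^2)^k * (δ₁ * δ₂^l * ((2*m).choose l : R)) * (y^2)^l else 0) := by
    intro k l
    split_ifs <;> ring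
  simp only [hsplit, Finset.sum_add_distrib]
  rw [Finset.sum_comm (s := range (2*m+1)) (t := range (2*m+1))
      (f := fun k l => (if k + l = m then (x^2)^k * (2 * ((2*m).choose (2*l)) : R) * (y^2)^l else 0)),
    Finset.sum_comm (s := range (2*m+1)) (t := range (2*m+1))
      (f := fun k l => (if k + l = 2*m then (x^2)^k * (δ₁ * δ₂^l * ((2*m).choose l : R)) * (y^2)^l else 0))]
  have h1 : ∀ l ∈ range (2*m+1),
      (∑ k ∈ range (2*m+1), if k + l = m then (x^2)^k * (2 * ((2*m).choose (2*l)) : R) * (y^2)^l else 0)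
      = if l ≤ m then (x^2)^(m-l) * (2 * ((2*m).choose (2*l)) : R) * (y^2)^l else 0 := by
    intro l _
    rw [sum_if_eq (2*m+1) m l (fun k => (x^2)^k * (2 * ((2*m).choose (2*l)) : R) * (y^2)^l)]
    exact if_congr (by omega) rfl rfl
  have h2 : ∀ l ∈ range (2*m+1),
      (∑ k ∈ range (2*m+1), if k + l = 2*m then (x^2)^k * (δ₁ * δ₂^l * ((2*m).choose l : R)) * (y^2)^l else 0)
      = (x^2)^(2*m-l) * (δ₁ * δ₂^l * ((2*m).choose l : R)) * (y^2)^l := by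
    intro l hl
    rw [sum_if_eq (2*m+1) (2*m) l (fun k => (x^2)^k * (δ₁ * δ₂^l * ((2*m).choose l : R)) * (y^2)^l)]
    rw [if_pos (by simp only [Finset.mem_range] at hl; omega)]
  rw [Finset.sum_congr rfl h1, Finset.sum_congr rfl h2]
  -- second part
  have p2 : δ₁*(x^2+δ₂*y^2)^(2*m)
      = ∑ l ∈ range (2*m+1), (x^2)^(2*m-l) * (δ₁ * δ₂^l * ((2*m).choose l : R)) * (y^2)^l := by
    rw [add_comm (x^2) (δ₂*y^2), add_pow, Finset.mul_sum]
    refine Finset.sum_congr rfl fun l _ => ?_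
    rw [mul_pow]
    ring
  -- first part
  have p1 : (x+y)^(2*m) + (x-y)^(2*m)
      = ∑ l ∈ range (2*m+1), if l ≤ m then (x^2)^(m-l) * (2 * ((2*m).choose (2*l)) : R) * (y^2)^l else 0 := by
    have e1 : (x+y)^(2*m) + (x-y)^(2*m)
        = ∑ r ∈ range (2*m+1), (y^r + (-y)^r) * x^(2*m-r) * ((2*m).choose r : R) := by
      have hx : x - y = -y + x := by ring
      rw [add_comm x y, add_pow, hx, add_pow, ← Finset.sum_add_distrib]
      refine Finset.sum_congr rfl fun r _ => ?_
      ring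
    have hodd : ∀ r, Odd r → (y^r + (-y)^r) * x^(2*m-r) * ((2*m).choose r : R) = 0 := by
      intro r hr
      rw [hr.neg_pow]
      ring
    have hR : (∑ l ∈ range (2*m+1), if l ≤ m then (x^2)^(m-l) * (2 * ((2*m).choose (2*l)) : R) * (y^2)^l else 0)
        = ∑ l ∈ range (m+1), if l ≤ m then (x^2)^(m-l) * (2 * ((2*m).choose (2*l)) : R) * (y^2)^l else 0 := by
      rw [show (2*m+1 : ℕ) = (m+1) + m by ring,
        Finset.sum_range_add (fun l => if l ≤ m then (x^2)^(m-l) * (2 * ((2*m).choose (2*l)) : R) * (y^2)^l else 0) (m+1) m]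
      have hz : ∀ i ∈ range m, (if ((m+1)+i) ≤ m then (x^2)^(m-((m+1)+i)) * (2 * ((2*m).choose (2*((m+1)+i))) : R) * (y^2)^((m+1)+i) else 0) = 0 := by
        intro i _
        rw [if_neg (by omega)]
      rw [Finset.sum_congr rfl hz, Finset.sum_const, smul_zero, add_zero]
    rw [e1, sum_even_range m (fun r => (y^r + (-y)^r) * x^(2*m-r) * ((2*m).choose r : R))
      (fun r hr => hodd r hr), hR]
    refine Finset.sum_congr rfl fun l hl => ?_
    simp only [Finset.mem_range] at hl
    rw [if_pos (by omega), Even.neg_pow ⟨l, by ring⟩, ← pow_mul, ← pow_mul]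
    have h2l : 2*(m-l) = 2*m - 2*l := by omega
    rw [h2l]
    ring
  rw [← p1, ← p2]

lemma key_square (m p : ℕ) (hm : 1 ≤ m) (hpm : p = 4 * m + 1) [Fact p.Prime] :
    ∃ u : ZMod p, u ≠ 0 ∧
      (2 : ZMod p) * ((∏ v ∈ range (2*m+1), (2*m).choose v : ℕ) : ZMod p) = u ^ 2 := by
  have hp : p.Prime := Fact.out
  have hp5 : 5 ≤ p := by omega
  -- z = (2m)! mod p satisfies z^2 = -1
  set z : ZMod p := (((2*m).factorial : ℕ) : ZMod p) with hzdef
  have hz2 : z * z = -1 := by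
    have hw := ZMod.wilsons_lemma p
    have h4m : p - 1 = 4 * m := by omega
    rw [h4m] at hw
    have e1 : (((4*m).factorial : ℕ) : ZMod p) = z * z := by
      rw [← Finset.prod_range_add_one_eq_factorial (4*m),
        show (4*m : ℕ) = 2*m + 2*m by ring,
        Finset.prod_range_add (fun x => x + 1) (2*m) (2*m)]
      push_cast
      have e3 : (∏ i ∈ range (2*m), ((2*m : ZMod p) + (i : ZMod p) + 1))
          = ∏ i ∈ range (2*m), (-(((2*m - i : ℕ)) : ZMod p)) := by
        refine Finset.prod_congr rfl fun i hi => ?_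
        simp only [Finset.mem_range] at hi
        have h0 : (((2*m + i + 1 : ℕ)) : ZMod p) + ((2*m - i : ℕ) : ZMod p) = 0 := by
          rw [← Nat.cast_add, show (2*m + i + 1) + (2*m - i) = p by omega,
            ZMod.natCast_self]
        push_cast at h0
        linear_combination h0
      rw [e3]
      have e4 : (∏ i ∈ range (2*m), (-(((2*m - i : ℕ)) : ZMod p)))
          = ∏ i ∈ range (2*m), (((2*m - i : ℕ)) : ZMod p) := by
        have : ∀ i ∈ range (2*m), (-(((2*m - i : ℕ)) : ZMod p))
            = (-1) * (((2*m - i : ℕ)) : ZMod p) := fun i _ => by ring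
        rw [Finset.prod_congr rfl this, Finset.prod_mul_distrib, Finset.prod_const,
          Finset.card_range, Even.neg_one_pow ⟨m, by ring⟩, one_mul]
      rw [e4]
      have e5 : (∏ i ∈ range (2*m), (((2*m - i : ℕ)) : ZMod p)) = z := by
        rw [← Nat.cast_prod, hzdef, ← Finset.prod_range_add_one_eq_factorial (2*m)]
        congr 1
        have := Finset.prod_range_reflect (fun x => x + 1) (2*m)
        rw [← this]
        refine Finset.prod_congr rfl fun i hi => ?_
        simp only [Finset.mem_range] at hi
        omega
      rw [e5]
      have e0 : (∏ x ∈ range (2*m), ((x : ZMod p) + 1)) = z := by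
        rw [hzdef, ← Finset.prod_range_add_one_eq_factorial (2*m), Nat.cast_prod]
        push_cast
        rfl
      rw [e0]
    rw [← e1, hw]
  have hzne : z ≠ 0 := by
    intro h
    rw [h, mul_zero] at hz2
    exact (by simp : (0 : ZMod p) ≠ -1) hz2
  have h2ne : (2 : ZMod p) ≠ 0 := by
    have : ((2:ℕ) : ZMod p) ≠ 0 := by
      rw [Ne, ZMod.natCast_eq_zero_iff]
      intro h
      have := Nat.le_of_dvd (by norm_num) h
      omega
    simpa using this
  -- 2 ^ (2m) = (-1)^m
  have hp2 : p / 2 = 2*m := by omega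
  have h2m : (2 : ZMod p)^(2*m) = (-1 : ZMod p)^m := by
    have hsq : (2 : ZMod p)^(2*m) * (2 : ZMod p)^(2*m) = 1 := by
      rw [← pow_add, show 2*m + 2*m = p - 1 by omega]
      exact ZMod.pow_card_sub_one_eq_one h2ne
    have h12 := mul_self_eq_one_iff.mp hsq
    have hiff := ZMod.euler_criterion p h2ne
    rw [hp2] at hiff
    have h8 := ZMod.exists_sq_eq_two_iff (p := p) (by omega)
    rcases Nat.even_or_odd m with he | ho
    · have hmod : p % 8 = 1 := by
        obtain ⟨k, hk⟩ := he
        omega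
      have : IsSquare (2 : ZMod p) := h8.mpr (Or.inl hmod)
      rw [hiff.mp this, he.neg_one_pow]
    · have hmod : p % 8 = 5 := by
        obtain ⟨k, hk⟩ := ho
        omega
      have hns : ¬ IsSquare (2 : ZMod p) := by
        rw [h8]
        omega
      have : (2 : ZMod p)^(2*m) ≠ 1 := fun h => hns (hiff.mpr h)
      rcases h12 with h | h
      · exact absurd h this
      · rw [h, ho.neg_one_pow]
  -- 2z is a square
  have h2zne : (2 : ZMod p) * z ≠ 0 := mul_ne_zero h2ne hzne
  have hsq2z : IsSquare ((2 : ZMod p) * z) := by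
    rw [ZMod.euler_criterion p h2zne, hp2, mul_pow, h2m, pow_mul,
      show z^2 = z*z by ring, hz2, ← mul_pow]
    norm_num
  obtain ⟨s, hs⟩ := hsq2z
  have hsne : s ≠ 0 := by
    intro h
    rw [h, mul_zero] at hs
    exact h2zne hs
  -- superfactorial identity over ℕ
  have hNat : (∏ v ∈ range (2*m+1), (2*m).choose v)
      * ((∏ v ∈ range (2*m+1), v.factorial) * (∏ v ∈ range (2*m+1), v.factorial))
      = ((2*m).factorial)^(2*m+1) := by
    have hrefl : (∏ v ∈ range (2*m+1), (2*m - v).factorial)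
        = ∏ v ∈ range (2*m+1), v.factorial := by
      have := Finset.prod_range_reflect (fun x => x.factorial) (2*m+1)
      rw [← this]
      refine Finset.prod_congr rfl fun i hi => ?_
      norm_num
    calc (∏ v ∈ range (2*m+1), (2*m).choose v)
          * ((∏ v ∈ range (2*m+1), v.factorial) * (∏ v ∈ range (2*m+1), v.factorial))
        = ∏ v ∈ range (2*m+1), ((2*m).choose v * v.factorial * (2*m - v).factorial) := by
          rw [Finset.prod_mul_distrib, Finset.prod_mul_distrib, hrefl]
          ring
      _ = ∏ v ∈ range (2*m+1), (2*m).factorial := by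
          refine Finset.prod_congr rfl fun v hv => ?_
          simp only [Finset.mem_range] at hv
          exact Nat.choose_mul_factorial_mul_factorial (by omega)
      _ = ((2*m).factorial)^(2*m+1) := by
          rw [Finset.prod_const, Finset.card_range]
  -- cast to ZMod p
  set F : ZMod p := ((∏ v ∈ range (2*m+1), v.factorial : ℕ) : ZMod p) with hFdef
  have hFne : F ≠ 0 := by
    rw [hFdef, Nat.cast_prod]
    refine Finset.prod_ne_zero_iff.mpr fun v hv => ?_
    simp only [Finset.mem_range] at hv
    rw [Ne, ZMod.natCast_eq_zero_iff]
    rw [Nat.Prime.dvd_factorial hp]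
    omega
  set P : ZMod p := ((∏ v ∈ range (2*m+1), (2*m).choose v : ℕ) : ZMod p) with hPdef
  have hcast : P * (F * F) = z^(2*m+1) := by
    rw [hPdef, hFdef, hzdef, ← Nat.cast_mul, ← Nat.cast_mul, hNat, Nat.cast_pow]
  -- assemble
  refine ⟨s * z^m * F⁻¹, ?_, ?_⟩
  · exact mul_ne_zero (mul_ne_zero hsne (pow_ne_zero m hzne)) (inv_ne_zero hFne)
  · have key : (2 : ZMod p) * P * (F * F) = (s * z^m)^2 := by
      calc (2 : ZMod p) * P * (F * F) = 2 * (P * (F*F)) := by ring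
        _ = 2 * z^(2*m+1) := by rw [hcast]
        _ = (2 * z) * (z^m * z^m) := by
              rw [show (2*m+1) = m+m+1 by ring, pow_add, pow_add, pow_one]
              ring
        _ = (s * s) * (z^m * z^m) := by rw [hs]
        _ = (s * z^m)^2 := by ring
    have hFF : F * F ≠ 0 := mul_ne_zero hFne hFne
    field_simp
    linear_combination key

/-- The half-system extension: for any half-system `a` modulo sign,
`2D` is a nonzero square in `ZMod p`. -/
theorem stmt_19 (m : ℕ) (hm : 1 ≤ m) (p : ℕ) (hpm : p = 4 * m + 1) [Fact p.Prime]
    (χ : ZMod p → ZMod p)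
    (hχ : ∀ x : ZMod p, χ x = ((quadraticChar (ZMod p) x : ℤ) : ZMod p))
    (a : Fin (2 * m + 1) → ZMod p) (ha : Function.Injective a)
    (hhalf : ∀ x : ZMod p, (∃ i, a i = x) ∨ (∃ i, a i = -x))
    (δ₁ δ₂ : ZMod p) (hδ₁ : δ₁ = 1 ∨ δ₁ = -1) (hδ₂ : δ₂ = 1 ∨ δ₂ = -1)
    (D : ZMod p)
    (hD : D = (Matrix.of fun i j : Fin (2 * m + 1) =>
        χ (a i + a j) + χ (a i - a j) + δ₁ * χ (a i ^ 2 + δ₂ * a j ^ 2)).det) :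
    quadraticChar (ZMod p) (2 * D) = 1 := by
  have hp : p.Prime := Fact.out
  have hp2 : p / 2 = 2 * m := by omega
  -- χ is the power map x ↦ x ^ (2m)
  have hχpow : ∀ x : ZMod p, χ x = x ^ (2 * m) := by
    intro x
    have hx : (((x.val : ℤ)) : ZMod p) = x := by
      push_cast
      exact ZMod.natCast_rightInverse x
    have hls : legendreSym p ((x.val : ℤ)) = quadraticChar (ZMod p) x := by
      rw [legendreSym, hx]
    rw [hχ x, ← hls, legendreSym.eq_pow, hx, hp2]
  -- injectivity of i ↦ a i ^ 2
  have hsq_inj : Function.Injective (fun i => a i ^ 2) := by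
    classical
    set S : Finset (ZMod p) := Finset.univ.image a with hS
    set N : Finset (ZMod p) := S.image (fun x => -x) with hN
    have hcardS : S.card = 2 * m + 1 := by
      rw [hS, Finset.card_image_of_injective _ ha, Finset.card_univ, Fintype.card_fin]
    have hcardN : N.card = 2 * m + 1 := by
      rw [hN, Finset.card_image_of_injective _ neg_injective, hcardS]
    have hunion : S ∪ N = Finset.univ := by
      refine Finset.eq_univ_iff_forall.mpr fun x => ?_
      rcases hhalf x with ⟨i, hi⟩ | ⟨i, hi⟩
      · exact Finset.mem_union_left _ (hi ▸ Finset.mem_image_of_mem a (Finset.mem_univ i))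
      · refine Finset.mem_union_right _ ?_
        rw [hN]
        refine Finset.mem_image.mpr ⟨a i, Finset.mem_image_of_mem a (Finset.mem_univ i), ?_⟩
        rw [hi]
        ring
    have hinter : (S ∩ N).card = 1 := by
      have h1 := Finset.card_union_add_card_inter S N
      rw [hunion, Finset.card_univ, ZMod.card, hcardS, hcardN] at h1
      omega
    have h0S : (0 : ZMod p) ∈ S := by
      rcases hhalf 0 with ⟨i, hi⟩ | ⟨i, hi⟩
      · exact hi ▸ Finset.mem_image_of_mem a (Finset.mem_univ i)
      · rw [neg_zero] at hi
        exact hi ▸ Finset.mem_image_of_mem a (Finset.mem_univ i)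
    have hSN : S ∩ N = {0} := by
      refine (Finset.eq_of_subset_of_card_le ?_ ?_).symm
      · refine Finset.singleton_subset_iff.mpr (Finset.mem_inter.mpr ⟨h0S, ?_⟩)
        rw [hN]
        exact Finset.mem_image.mpr ⟨0, h0S, neg_zero⟩
      · rw [hinter, Finset.card_singleton]
    intro i j hij
    have hij' : a i ^ 2 = a j ^ 2 := hij
    have hfac : (a i - a j) * (a i + a j) = 0 := by linear_combination hij'
    rcases mul_eq_zero.mp hfac with h | h
    · exact ha (sub_eq_zero.mp h)
    · have hai : a i = - a j := eq_neg_of_add_eq_zero_left h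
      have haiN : a i ∈ N := by
        rw [hN]
        exact Finset.mem_image.mpr ⟨a j, Finset.mem_image_of_mem a (Finset.mem_univ j), hai.symm⟩
      have h0 : a i ∈ S ∩ N :=
        Finset.mem_inter.mpr ⟨Finset.mem_image_of_mem a (Finset.mem_univ i), haiN⟩
      rw [hSN, Finset.mem_singleton] at h0
      have haj : a j = 0 := by
        have := h0
        rw [hai] at this
        linear_combination -this
      exact ha (by rw [h0, haj])
  -- matrix decomposition M = V * C * Vᵀ
  set V : Matrix (Fin (2*m+1)) (Fin (2*m+1)) (ZMod p) := Matrix.vandermonde (fun i => a i ^ 2) with hV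
  set C : Matrix (Fin (2*m+1)) (Fin (2*m+1)) (ZMod p) :=
    Matrix.of (fun k l : Fin (2*m+1) => cmat (ZMod p) m δ₁ δ₂ (k : ℕ) (l : ℕ)) with hC
  have hM : (Matrix.of fun i j : Fin (2 * m + 1) =>
      χ (a i + a j) + χ (a i - a j) + δ₁ * χ (a i ^ 2 + δ₂ * a j ^ 2)) = V * C * Vᵀ := by
    ext i j
    have hVCV : (V * C * Vᵀ) i j
        = ∑ k ∈ range (2*m+1), ∑ l ∈ range (2*m+1),
            ((a i ^ 2)) ^ k * cmat (ZMod p) m δ₁ δ₂ k l * ((a j ^ 2)) ^ l := by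
      simp only [hV, hC, Matrix.mul_apply, Matrix.transpose_apply, Matrix.of_apply,
        Finset.sum_mul, Matrix.vandermonde_apply]
      rw [Finset.sum_comm]
      rw [← Fin.sum_univ_eq_sum_range (fun k => ∑ l ∈ range (2*m+1),
        ((a i ^ 2)) ^ k * cmat (ZMod p) m δ₁ δ₂ k l * ((a j ^ 2)) ^ l) (2*m+1)]
      refine Finset.sum_congr rfl fun k _ => ?_
      rw [← Fin.sum_univ_eq_sum_range (fun l =>
        ((a i ^ 2)) ^ (k : ℕ) * cmat (ZMod p) m δ₁ δ₂ (k : ℕ) l * ((a j ^ 2)) ^ l) (2*m+1)]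
    rw [Matrix.of_apply, hVCV, hχpow, hχpow, hχpow]
    exact entry_eq m δ₁ δ₂ (a i) (a j)
  -- determinant of V is nonzero
  have hdetV : V.det ≠ 0 := by
    rw [hV]
    exact Matrix.det_vandermonde_ne_zero_iff.mpr hsq_inj
  -- determinant of C
  set U : Matrix (Fin (2*m+1)) (Fin (2*m+1)) (ZMod p) := C.submatrix (Fin.revPerm : Equiv.Perm (Fin (2*m+1))) id
    with hU
  have hUtri : U.BlockTriangular OrderDual.toDual := by
    intro i j hji
    have hij : (i : ℕ) < (j : ℕ) := hji
    have hi2m : (i : ℕ) ≤ 2 * m := by have := i.isLt; omega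
    have hj2m : (j : ℕ) ≤ 2 * m := by have := j.isLt; omega
    have hrev : ((Fin.rev i : Fin (2*m+1)) : ℕ) = 2 * m - (i : ℕ) := by
      rw [Fin.val_rev]
      omega
    show C (Fin.rev i) j = 0
    rw [hC, Matrix.of_apply, hrev]
    unfold cmat
    rw [if_neg (by omega), if_neg (by omega), add_zero]
  have hUdiag : ∀ k : Fin (2*m+1), U k k = δ₁ * δ₂ ^ (k : ℕ) * ((2*m).choose (k : ℕ) : ZMod p) := by
    intro k
    have hk2m : (k : ℕ) ≤ 2 * m := by have := k.isLt; omega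
    have hrev : ((Fin.rev k : Fin (2*m+1)) : ℕ) = 2 * m - (k : ℕ) := by
      rw [Fin.val_rev]
      omega
    show C (Fin.rev k) k = _
    rw [hC, Matrix.of_apply, hrev]
    unfold cmat
    rw [if_neg (by omega), if_pos (by omega), zero_add]
  have hdetU : U.det = ∏ k : Fin (2*m+1), (δ₁ * δ₂ ^ (k : ℕ) * ((2*m).choose (k : ℕ) : ZMod p)) := by
    rw [Matrix.det_of_lowerTriangular U hUtri]
    exact Finset.prod_congr rfl fun k _ => hUdiag k
  -- products of ±1
  have hpm1 : ∀ (w : ZMod p), (w = 1 ∨ w = -1) → ∀ t : ℕ, w ^ t = 1 ∨ w ^ t = -1 := by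
    rintro w (rfl | rfl) t
    · exact Or.inl (one_pow t)
    · rcases Nat.even_or_odd t with h | h
      · exact Or.inl (h.neg_one_pow)
      · exact Or.inr (h.neg_one_pow)
  -- det C = w * P with w = ±1
  set P : ZMod p := ((∏ v ∈ range (2*m+1), (2*m).choose v : ℕ) : ZMod p) with hP
  have hdetC : ∃ w : ZMod p, (w = 1 ∨ w = -1) ∧ C.det = w * P := by
    have hperm := Matrix.det_permute (Fin.revPerm : Equiv.Perm (Fin (2*m+1))) C
    rw [← hU] at hperm
    have hprod : (∏ k : Fin (2*m+1), (δ₁ * δ₂ ^ (k : ℕ) * ((2*m).choose (k : ℕ) : ZMod p)))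
        = (δ₁ ^ (2*m+1) * ∏ k : Fin (2*m+1), δ₂ ^ (k : ℕ)) * P := by
      have hPP : (∏ k : Fin (2*m+1), ((2*m).choose (k : ℕ) : ZMod p)) = P := by
        rw [hP, Nat.cast_prod, ← Fin.prod_univ_eq_prod_range (fun v => ((2*m).choose v : ZMod p)) (2*m+1)]
      rw [Finset.prod_mul_distrib, Finset.prod_mul_distrib, Finset.prod_const,
        Finset.card_univ, Fintype.card_fin, hPP]
    have hw1 : δ₁ ^ (2*m+1) * ∏ k : Fin (2*m+1), δ₂ ^ (k : ℕ) = 1 ∨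
        δ₁ ^ (2*m+1) * ∏ k : Fin (2*m+1), δ₂ ^ (k : ℕ) = -1 := by
      have h1 := hpm1 δ₁ hδ₁ (2*m+1)
      have h2 : (∏ k : Fin (2*m+1), δ₂ ^ (k : ℕ)) = δ₂ ^ (∑ k : Fin (2*m+1), (k : ℕ)) := by
        rw [← Finset.prod_pow_eq_pow_sum]
      rw [h2]
      have h3 := hpm1 δ₂ hδ₂ (∑ k : Fin (2*m+1), (k : ℕ))
      rcases h1 with h | h <;> rcases h3 with h' | h' <;> rw [h, h'] <;> norm_num
    rcases Int.units_eq_one_or (Equiv.Perm.sign (Fin.revPerm : Equiv.Perm (Fin (2*m+1)))) with hs | hs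
    · refine ⟨δ₁ ^ (2*m+1) * ∏ k : Fin (2*m+1), δ₂ ^ (k : ℕ), hw1, ?_⟩
      rw [hs] at hperm
      simp only [Units.val_one, Int.cast_one, one_mul] at hperm
      rw [← hperm, hdetU, hprod]
    · refine ⟨-(δ₁ ^ (2*m+1) * ∏ k : Fin (2*m+1), δ₂ ^ (k : ℕ)), ?_, ?_⟩
      · rcases hw1 with h | h <;> rw [h]
        · exact Or.inr rfl
        · exact Or.inl (by ring)
      · rw [hs] at hperm
        simp only [Units.val_neg, Units.val_one, Int.cast_neg, Int.cast_one, neg_mul,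
          one_mul] at hperm
        have : C.det = - U.det := by linear_combination hperm
        rw [this, hdetU, hprod]
        ring
  obtain ⟨w, hw, hCdet⟩ := hdetC
  -- key square
  obtain ⟨u, hune, hu⟩ := key_square m p hm hpm
  -- -1 is a square
  have hi2 : ∃ i0 : ZMod p, i0 * i0 = -1 ∧ i0 ≠ 0 := by
    have : IsSquare (-1 : ZMod p) := ZMod.exists_sq_eq_neg_one_iff.mpr (by omega)
    obtain ⟨i0, hi0⟩ := this
    refine ⟨i0, hi0.symm, ?_⟩
    intro h
    rw [h, mul_zero] at hi0
    simp at hi0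
  obtain ⟨i0, hi0, hi0ne⟩ := hi2
  have hDval : D = V.det * C.det * V.det := by
    rw [hD, hM, Matrix.det_mul, Matrix.det_mul, Matrix.det_transpose]
  have key : 2 * D = V.det ^ 2 * w * u ^ 2 := by
    rw [hDval, hCdet, ← hu]
    ring
  have hfin : ∃ U0 : ZMod p, U0 ≠ 0 ∧ 2 * D = U0 * U0 := by
    rcases hw with h | h
    · refine ⟨V.det * u, mul_ne_zero hdetV hune, ?_⟩
      rw [key, h]
      ring
    · refine ⟨i0 * (V.det * u), mul_ne_zero hi0ne (mul_ne_zero hdetV hune), ?_⟩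
      rw [key, h]
      linear_combination (-(V.det^2 * u^2)) * hi0
  obtain ⟨U0, hU0ne, hU0⟩ := hfin
  have h2Dne : 2 * D ≠ 0 := by
    rw [hU0]
    exact mul_ne_zero hU0ne hU0ne
  rw [quadraticChar_one_iff_isSquare h2Dne]
  exact ⟨U0, hU0⟩
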